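/- Suppose moduli spaces M̄(B_i, B_{i-j}) are abstract topological chains of degree j + b_i − 1 with boundary ∂M̄(B_i,B_{i-j}) = (−1)^{i+b_i} Σ_{i-j<n<i} M̄(B_i,B_n) ×_{B_n} M̄(B_n,B_{i-j}), where b_i = dim B_i and fibered products over B_n lower degree by b_n and satisfy the signed Leibniz rule ∂(P×_B Q) = ∂P ×_B Q + (−1)^{deg P + dim B} P ×_B ∂Q. Then ∂ ∘ ∂ = 0 on each M̄(B_i, B_{i-j}). -/

import Mathlib

/-- Lemma 5.8 of Banyaga–Hurtubise, abstractly: the compactified moduli spaces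
`M̄(B_b, B_a)` are abstract topological chains of degree `(b-a) + dim B_b - 1`
with boundary
`∂M̄(B_i,B_a) = (-1)^{i + dim B_i} ∑_{a<n<i} M̄(B_i,B_n) ×_{B_n} M̄(B_n,B_a)`,
where the fibered product `×_{B_n}` lowers degree by `dim B_n` and satisfies the
signed Leibniz rule.  Then the boundary squares to zero on each `M̄(B_i,B_a)`. -/
theorem stmt_14 (m : ℕ) (bdim : ℕ → ℕ) (A : Type*) [AddCommGroup A]
    (G : ℤ → AddSubgroup A) (d : A →+ A) (μ : ℕ → A →+ A →+ A)
    (Msp : ℕ → ℕ → A)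
    (hMgrade : ∀ b a : ℕ, a < b → Msp b a ∈ G ((b : ℤ) - a + bdim b - 1))
    (hμgrade : ∀ (n : ℕ) (p q : ℤ), ∀ x ∈ G p, ∀ y ∈ G q,
      μ n x y ∈ G (p + q - bdim n))
    (hassoc : ∀ (n n' : ℕ) (x y z : A), μ n' (μ n x y) z = μ n x (μ n' y z))
    (hleib : ∀ (n : ℕ) (p : ℤ), ∀ x ∈ G p, ∀ y : A,
      d (μ n x y) =
        μ n (d x) y + (((-1 : ℤˣ) ^ (p + (bdim n : ℤ))) : ℤˣ).val • μ n x (d y))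
    (hbdry : ∀ i a : ℕ, a < i → i ≤ m →
      d (Msp i a) = ((-1 : ℤ) ^ (i + bdim i)) •
        ∑ n ∈ Finset.Ioo a i, μ n (Msp i n) (Msp n a)) :
    ∀ i a : ℕ, a < i → i ≤ m → d (d (Msp i a)) = 0 := by
  intro i a hai him
  set c : ℤ := (-1) ^ (i + bdim i) with hc
  have key : ∀ n ∈ Finset.Ioo a i,
      d (μ n (Msp i n) (Msp n a)) =
        c • (∑ k ∈ Finset.Ioo n i, μ k (Msp i k) (μ n (Msp k n) (Msp n a)))
        - c • (∑ k ∈ Finset.Ioo a n, μ n (Msp i n) (μ k (Msp n k) (Msp k a))) := by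
    intro n hn
    rw [Finset.mem_Ioo] at hn
    obtain ⟨han, hni⟩ := hn
    have hnm : n ≤ m := le_of_lt (lt_of_lt_of_le hni him)
    rw [hleib n _ (Msp i n) (hMgrade i n hni) (Msp n a),
      hbdry i n hni him, hbdry n a han hnm]
    have hz : ((i : ℤ) - n + bdim i - 1) + (bdim n : ℤ)
        = ((i - n - 1 + bdim i + bdim n : ℕ) : ℤ) := by
      push_cast [Nat.sub_sub]
      omega
    have hval : (((-1 : ℤˣ) ^ (((i : ℤ) - n + bdim i - 1) + (bdim n : ℤ))) : ℤˣ).val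
        = (-1 : ℤ) ^ (i - n - 1 + bdim i + bdim n) := by
      rw [hz, zpow_natCast]
      simp
    have hsign : ((-1 : ℤ) ^ (i - n - 1 + bdim i + bdim n)) * ((-1 : ℤ) ^ (n + bdim n))
        = -c := by
      rw [hc, ← pow_add,
        show -((-1 : ℤ) ^ (i + bdim i)) = (-1 : ℤ) ^ (i + bdim i + 1) by
          rw [pow_succ]; ring,
        neg_one_pow_eq_pow_mod_two, neg_one_pow_eq_pow_mod_two (n := i + bdim i + 1)]
      congr 1
      omega
    simp only [map_zsmul, map_sum, AddMonoidHom.smul_apply, AddMonoidHom.finset_sum_apply,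
      hassoc, hval, smul_smul, hsign]
    rw [sub_eq_add_neg, ← neg_smul]
  rw [hbdry i a hai him, map_zsmul, map_sum, Finset.sum_congr rfl key,
    Finset.sum_sub_distrib, ← Finset.smul_sum, ← Finset.smul_sum]
  have hswap : (∑ n ∈ Finset.Ioo a i, ∑ k ∈ Finset.Ioo n i,
        μ k (Msp i k) (μ n (Msp k n) (Msp n a)))
      = ∑ n ∈ Finset.Ioo a i, ∑ k ∈ Finset.Ioo a n,
        μ n (Msp i n) (μ k (Msp n k) (Msp k a)) := by
    refine Finset.sum_comm' ?_
    intro x y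
    simp only [Finset.mem_Ioo]
    omega
  rw [hswap, sub_self, smul_zero]
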